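/- Let φ(x) = x² + 1 over a number field K. For every positive integer n, the polynomial P_n(x) := φ^n(x) - x (the n-th iterate of φ minus x) has only simple roots in an algebraic closure of Q. -/
import Mathlib

open Polynomial

lemma deg21 : ((X : ℤ[X]) ^ 2 + 1).natDegree = 2 := by compute_degree!

lemma iter_aeval {R A : Type*} [CommRing R] [CommRing A] [Algebra R A] (n : ℕ) (r : A) :
    aeval r ((fun p : R[X] => p.comp (X ^ 2 + 1))^[n] X) = (fun x : A => x ^ 2 + 1)^[n] r := by
  induction n generalizing r with
  | zero => simp
  | succ n ih =>
    rw [Function.iterate_succ_apply']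
    simp only [aeval_comp, map_add, map_pow, aeval_X, map_one]
    rw [ih (r ^ 2 + 1), Function.iterate_succ_apply]

lemma iter_monic (n : ℕ) : ((fun p : ℤ[X] => p.comp (X ^ 2 + 1))^[n] X).Monic ∧
    ((fun p : ℤ[X] => p.comp (X ^ 2 + 1))^[n] X).natDegree = 2 ^ n := by
  induction n with
  | zero => simp [monic_X]
  | succ n ih =>
    rw [Function.iterate_succ_apply']
    refine ⟨ih.1.comp (by monicity!) (by rw [deg21]; norm_num), ?_⟩
    rw [natDegree_comp, ih.2, deg21]
    ring

lemma iter_deriv {R A : Type*} [CommRing R] [CommRing A] [Algebra R A] (n : ℕ) (r : A) :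
    aeval r (derivative ((fun p : R[X] => p.comp (X ^ 2 + 1))^[n] X)) =
      2 ^ n * ∏ k ∈ Finset.range n, (fun x : A => x ^ 2 + 1)^[k] r := by
  induction n generalizing r with
  | zero => simp
  | succ n ih =>
    rw [Function.iterate_succ_apply', derivative_comp]
    simp only [map_mul, aeval_comp, map_add, map_pow, aeval_X, map_one, derivative_add,
      derivative_X_pow, derivative_one, add_zero, map_ofNat]
    rw [ih (r ^ 2 + 1), Finset.prod_range_succ']
    simp only [← Function.iterate_succ_apply, aeval_C, map_ofNat,
      Function.iterate_zero_apply, Nat.succ_eq_add_one]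
    rw [map_natCast]
    push_cast
    ring

/-- For `φ(x) = x² + 1` over a number field `K`, the polynomial
`P_n(x) = φ^n(x) - x` has only simple roots in an algebraic closure:
at every root the derivative is nonzero. -/
theorem stmt_1 (K : Type*) [Field K] [NumberField K] (n : ℕ) (hn : 1 ≤ n) :
    ∀ r : AlgebraicClosure K,
      aeval r ((fun p : Polynomial K => p.comp (X ^ 2 + 1))^[n] X - X) = 0 →
      aeval r (derivative ((fun p : Polynomial K => p.comp (X ^ 2 + 1))^[n] X - X)) ≠ 0 := by
  intro r hr hd
  haveI : CharZero (AlgebraicClosure K) :=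
    charZero_of_injective_algebraMap (algebraMap K (AlgebraicClosure K)).injective
  have key : (fun x : AlgebraicClosure K => x ^ 2 + 1)^[n] r = r := by
    rw [map_sub, iter_aeval, aeval_X, sub_eq_zero] at hr; exact hr
  have hrint : IsIntegral ℤ r := by
    refine ⟨(fun p : ℤ[X] => p.comp (X ^ 2 + 1))^[n] X - X, ?_, ?_⟩
    · apply Monic.sub_of_left (iter_monic n).1
      rw [degree_X, degree_eq_natDegree (iter_monic n).1.ne_zero, (iter_monic n).2]
      exact_mod_cast Nat.one_lt_two_pow_iff.mpr (by omega)
    · rw [← aeval_def, map_sub, iter_aeval, aeval_X, key, sub_self]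
  have hiter : ∀ k, IsIntegral ℤ ((fun x : AlgebraicClosure K => x ^ 2 + 1)^[k] r) := by
    intro k
    induction k with
    | zero => simpa
    | succ k ih => rw [Function.iterate_succ_apply']; exact (ih.pow 2).add isIntegral_one
  have hprod : IsIntegral ℤ
      (∏ k ∈ Finset.range n, (fun x : AlgebraicClosure K => x ^ 2 + 1)^[k] r) :=
    IsIntegral.prod _ fun k _ => hiter k
  rw [derivative_sub, derivative_X, map_sub, iter_deriv, map_one, sub_eq_zero] at hd
  have h2 : (∏ k ∈ Finset.range n, (fun x : AlgebraicClosure K => x ^ 2 + 1)^[k] r)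
      = algebraMap ℚ (AlgebraicClosure K) ((2 : ℚ) ^ n)⁻¹ := by
    rw [map_inv₀, map_pow, map_ofNat]
    exact eq_inv_of_mul_eq_one_right (by linear_combination hd)
  rw [h2] at hprod
  have h3 : IsIntegral ℤ ((2 : ℚ) ^ n)⁻¹ :=
    (isIntegral_algebraMap_iff (algebraMap ℚ (AlgebraicClosure K)).injective).mp hprod
  obtain ⟨m, hm⟩ := IsIntegrallyClosed.isIntegral_iff.mp h3
  rw [eq_intCast] at hm
  have hq : (m : ℚ) * 2 ^ n = 1 := by rw [hm]; field_simp
  have hz : m * 2 ^ n = 1 := by exact_mod_cast hq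
  have : (2 : ℤ) ∣ 1 := (dvd_pow_self 2 (by omega : n ≠ 0)).trans ⟨m, by linarith⟩
  norm_num at this
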